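/- arXiv:2311.05369 — 4 statements merged into one kernel-verified Lean document; each statement's English description precedes it below -/
import Mathlib

section
/- For positive integers a_1,...,a_n and b_1,...,b_m, the greatest common divisor of the products satisfies gcd(a_1⋯a_n, b_1⋯b_m) ≤ ∏_{i=1}^{n} ∏_{j=1}^{m} gcd(a_i, b_j). -/
lemma gcd_prod_aux {ι : Type*} [DecidableEq ι] (k : ℕ) (s : Finset ι) (f : ι → ℕ) :
    Nat.gcd k (∏ j ∈ s, f j) ∣ ∏ j ∈ s, Nat.gcd k (f j) := by
  induction s using Finset.induction with
  | empty => simp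
  | insert _ _ h ih =>
    rw [Finset.prod_insert h, Finset.prod_insert h]
    exact (Nat.gcd_mul_right_dvd_mul_gcd _ _ _).trans (mul_dvd_mul_left _ ih)

theorem gcd_prod_le_prod_gcd (n m : ℕ) (a : Fin n → ℕ) (b : Fin m → ℕ)
    (ha : ∀ i, 0 < a i) (hb : ∀ j, 0 < b j) :
    Nat.gcd (∏ i, a i) (∏ j, b j) ≤ ∏ i, ∏ j, Nat.gcd (a i) (b j) := by
  have h1 : Nat.gcd (∏ i, a i) (∏ j, b j) ∣ ∏ j, Nat.gcd (∏ i, a i) (b j) :=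
    gcd_prod_aux _ _ _
  have h2 : (∏ j, Nat.gcd (∏ i, a i) (b j)) ∣ ∏ j, ∏ i, Nat.gcd (a i) (b j) := by
    apply Finset.prod_dvd_prod_of_dvd
    intro j _
    rw [Nat.gcd_comm]
    refine (gcd_prod_aux _ _ _).trans ?_
    apply Finset.prod_dvd_prod_of_dvd
    intro i _
    rw [Nat.gcd_comm]
  have h3 := h1.trans h2
  rw [Finset.prod_comm] at h3
  refine Nat.le_of_dvd ?_ h3
  exact Finset.prod_pos fun i _ => Finset.prod_pos fun j _ =>
    Nat.gcd_pos_of_pos_left _ (ha i)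
end

section
/- Let U_n = (U_{n,1},...,U_{n,s}) be uniformly distributed on {1,...,n}^s with s ≥ 2. Then for each fixed j ∈ ℕ, the probability that gcd(U_{n,1},...,U_{n,s}) = j converges, as n → ∞, to 1/(ζ(s)·j^s). -/
open Filter Finset ArithmeticFunction
open scoped LSeries.notation
open scoped ArithmeticFunction.Moebius ArithmeticFunction.zeta

lemma aux_piFinset_dvd_card (s m d : ℕ) :
    ((Fintype.piFinset fun _ : Fin s => Finset.Icc 1 m).filter
      (fun y : Fin s → ℕ => ∀ i, d ∣ y i)).card = (m / d) ^ s := by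
  have h : ((Fintype.piFinset fun _ : Fin s => Finset.Icc 1 m).filter
      (fun y : Fin s → ℕ => ∀ i, d ∣ y i))
      = Fintype.piFinset fun _ : Fin s => (Finset.Icc 1 m).filter (d ∣ ·) := by
    ext y
    simp [Fintype.mem_piFinset, mem_filter, forall_and]
  rw [h, Fintype.card_piFinset]
  have h2 : ((Finset.Icc 1 m).filter (d ∣ ·)).card = m / d := by
    rw [show Finset.Icc 1 m = Finset.Ioc 0 m from Finset.Icc_add_one_left_eq_Ioc 0 m]
    exact Nat.Ioc_filter_dvd_card_eq_div m d
  simp [h2]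

lemma aux_card_gcd_one (s : ℕ) (hs : 1 ≤ s) (m : ℕ) :
    (((Fintype.piFinset fun _ : Fin s => Finset.Icc 1 m).filter
      (fun y : Fin s → ℕ => Finset.univ.gcd y = 1)).card : ℤ)
      = ∑ d ∈ Finset.Icc 1 m, μ d * ((m / d : ℕ) : ℤ) ^ s := by
  rw [Finset.card_filter]
  push_cast
  have key : ∀ y ∈ Fintype.piFinset fun _ : Fin s => Finset.Icc 1 m,
      (if Finset.univ.gcd y = 1 then (1 : ℤ) else 0)
        = ∑ d ∈ Finset.Icc 1 m, if d ∣ Finset.univ.gcd y then μ d else 0 := by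
    intro y hy
    simp only [Fintype.mem_piFinset, Finset.mem_Icc] at hy
    set g := Finset.univ.gcd y with hg
    have i0 : Fin s := ⟨0, hs⟩
    have hg0 : g ≠ 0 := by
      intro h
      have := Finset.gcd_eq_zero_iff.mp h i0 (Finset.mem_univ _)
      have := (hy i0).1
      omega
    have hgle : g ≤ m := by
      have hdvd : g ∣ y i0 := Finset.gcd_dvd (Finset.mem_univ i0)
      have h1 : 1 ≤ y i0 := (hy i0).1
      exact le_trans (Nat.le_of_dvd (by omega) hdvd) (hy i0).2
    have hdiv : (Finset.Icc 1 m).filter (· ∣ g) = g.divisors := by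
      ext d
      simp only [Finset.mem_filter, Finset.mem_Icc, Nat.mem_divisors]
      constructor
      · rintro ⟨_, hd⟩; exact ⟨hd, hg0⟩
      · rintro ⟨hd, _⟩
        have hd0 : d ≠ 0 := by rintro rfl; exact hg0 (Nat.eq_zero_of_zero_dvd hd)
        exact ⟨⟨by omega, le_trans (Nat.le_of_dvd (Nat.pos_of_ne_zero hg0) hd) hgle⟩, hd⟩
    rw [← Finset.sum_filter, hdiv]
    have h : (μ * ζ : ArithmeticFunction ℤ) g = (1 : ArithmeticFunction ℤ) g := by
      rw [moebius_mul_coe_zeta]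
    rw [coe_mul_zeta_apply, ArithmeticFunction.one_apply] at h
    rw [h]
  rw [Finset.sum_congr rfl key, Finset.sum_comm]
  refine Finset.sum_congr rfl fun d hd => ?_
  rw [← Finset.sum_filter, Finset.sum_const, nsmul_eq_mul]
  have : (Fintype.piFinset fun _ : Fin s => Finset.Icc 1 m).filter
      (fun y : Fin s → ℕ => d ∣ Finset.univ.gcd y)
      = (Fintype.piFinset fun _ : Fin s => Finset.Icc 1 m).filter
      (fun y : Fin s → ℕ => ∀ i, d ∣ y i) := by
    apply Finset.filter_congr
    intro y _
    rw [Finset.dvd_gcd_iff]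
    constructor
    · intro h i; exact h i (Finset.mem_univ i)
    · intro h i _; exact h i
  rw [this, aux_piFinset_dvd_card]
  push_cast
  ring

lemma aux_card_gcd_j (s j : ℕ) (hj : 1 ≤ j) (n : ℕ) :
    ((Fintype.piFinset fun _ : Fin s => Finset.Icc 1 n).filter
      (fun x : Fin s → ℕ => Finset.univ.gcd x = j)).card
    = ((Fintype.piFinset fun _ : Fin s => Finset.Icc 1 (n / j)).filter
      (fun y : Fin s → ℕ => Finset.univ.gcd y = 1)).card := by
  have hj0 : j ≠ 0 := by omega
  refine Finset.card_bij' (fun x _ => fun i => x i / j) (fun y _ => fun i => j * y i)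
    ?_ ?_ ?_ ?_
  · intro x hx
    simp only [Finset.mem_filter, Fintype.mem_piFinset, Finset.mem_Icc] at hx ⊢
    obtain ⟨hmem, hgcd⟩ := hx
    have hdvd : ∀ i, j ∣ x i := fun i => hgcd ▸ Finset.gcd_dvd (Finset.mem_univ i)
    refine ⟨fun i => ⟨?_, Nat.div_le_div_right (hmem i).2⟩, ?_⟩
    · have := Nat.le_of_dvd (by have := (hmem i).1; omega) (hdvd i)
      exact Nat.one_le_div_iff (by omega) |>.mpr this
    · have hx' : (fun i => j * (x i / j)) = x := by
        funext i; exact Nat.mul_div_cancel' (hdvd i)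
      have := Finset.gcd_mul_left (s := (Finset.univ : Finset (Fin s)))
        (f := fun i => x i / j) (a := j)
      rw [hx', hgcd] at this
      have hnorm : normalize j = j := normalize_eq j
      rw [hnorm] at this
      have : j * 1 = j * Finset.univ.gcd (fun i => x i / j) := by rw [mul_one]; exact this
      exact (mul_left_cancel₀ hj0 this).symm
  · intro y hy
    simp only [Finset.mem_filter, Fintype.mem_piFinset, Finset.mem_Icc] at hy ⊢
    obtain ⟨hmem, hgcd⟩ := hy
    refine ⟨fun i => ⟨Nat.one_le_iff_ne_zero.mpr (Nat.mul_ne_zero hj0 (by have := (hmem i).1; omega)), ?_⟩, ?_⟩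
    · calc j * y i ≤ j * (n / j) := Nat.mul_le_mul_left j (hmem i).2
        _ ≤ n := by rw [mul_comm]; exact Nat.div_mul_le_self n j
    · have := Finset.gcd_mul_left (s := (Finset.univ : Finset (Fin s)))
        (f := fun i => y i) (a := j)
      rw [hgcd, normalize_eq j, mul_one] at this
      exact this
  · intro x hx
    simp only [Finset.mem_filter] at hx
    funext i
    exact Nat.mul_div_cancel' (hx.2 ▸ Finset.gcd_dvd (Finset.mem_univ i))
  · intro y _
    funext i
    exact Nat.mul_div_cancel_left _ (by omega)

lemma aux_div_tendsto (m : ℕ) (hm : 0 < m) :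
    Tendsto (fun n : ℕ => ((n / m : ℕ) : ℝ) / (n : ℝ)) atTop (nhds (1 / m)) := by
  have hm' : (0 : ℝ) < m := by exact_mod_cast hm
  apply tendsto_of_tendsto_of_tendsto_of_le_of_le'
    (g := fun n : ℕ => 1 / (m : ℝ) - 1 / (n : ℝ)) (h := fun _ : ℕ => 1 / (m : ℝ))
  · simpa using (tendsto_const_nhds (x := 1 / (m:ℝ))).sub tendsto_one_div_atTop_nhds_zero_nat
  · exact tendsto_const_nhds
  · filter_upwards [eventually_ge_atTop 1] with n hn
    have hn' : (0 : ℝ) < n := by exact_mod_cast hn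
    have hlow : (n : ℝ) / m - 1 ≤ ((n / m : ℕ) : ℝ) := by
      have h1 : n < m * (n / m) + m := by
        have := Nat.div_add_mod n m
        have := Nat.mod_lt n hm
        omega
      have h2 : (n : ℝ) < m * ((n / m : ℕ) : ℝ) + m := by exact_mod_cast h1
      rw [sub_le_iff_le_add, div_le_iff₀ hm']
      nlinarith
    calc 1 / (m : ℝ) - 1 / n = ((n : ℝ) / m - 1) / n := by field_simp
      _ ≤ ((n / m : ℕ) : ℝ) / n := by gcongr
  · filter_upwards [eventually_ge_atTop 1] with n hn
    have hn' : (0 : ℝ) < n := by exact_mod_cast hn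
    have hup : ((n / m : ℕ) : ℝ) ≤ (n : ℝ) / m := Nat.cast_div_le
    calc ((n / m : ℕ) : ℝ) / n ≤ ((n : ℝ) / m) / n := by gcongr
      _ = 1 / m := by field_simp

/-- The probability that the gcd of `s ≥ 2` uniform random elements of `{1,…,n}`
equals `j` converges to `1/(ζ(s) j^s)`. -/
theorem gcd_tuple_tendsto_zeta (s : ℕ) (hs : 2 ≤ s) (j : ℕ) (hj : 1 ≤ j) :
    Tendsto (fun n : ℕ =>
        (((Finset.filter (fun x : Fin s → ℕ => Finset.univ.gcd x = j)
            (Fintype.piFinset fun _ : Fin s => Finset.Icc 1 n)).card : ℝ) / (n : ℝ) ^ s : ℂ))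
      atTop (nhds (1 / (riemannZeta s * (j : ℂ) ^ s))) := by
  have hj0 : j ≠ 0 := by omega
  have hjC : (j : ℂ) ≠ 0 := Nat.cast_ne_zero.mpr hj0
  have hs0 : s ≠ 0 := by omega
  have hs1 : 1 < (s : ℂ).re := by
    simp only [Complex.natCast_re]
    exact_mod_cast (by omega : 1 < s)
  have hzne : riemannZeta s ≠ 0 := riemannZeta_ne_zero_of_one_lt_re hs1
  set F : ℕ → ℕ → ℂ := fun n d =>
    (μ d : ℂ) * ((n / (j * d) : ℕ) : ℂ) ^ s / (n : ℂ) ^ s with hF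
  set g : ℕ → ℂ := fun d => (μ d : ℂ) / ((j * d : ℕ) : ℂ) ^ s with hg
  -- value of the limit sum
  have hLmu : LSeries ↗μ s = 1 / riemannZeta s := by
    have h1 := LSeries_zeta_mul_Lseries_moebius hs1
    rw [LSeries_zeta_eq_riemannZeta hs1] at h1
    rw [eq_div_iff hzne, mul_comm]
    exact h1
  have hterm : ∀ d, g d = (1 / (j : ℂ) ^ s) * LSeries.term ↗μ s d := by
    intro d
    rcases eq_or_ne d 0 with rfl | hd
    · simp [hg, LSeries.term_zero]
    · rw [LSeries.term_of_ne_zero hd, Complex.cpow_natCast]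
      have hdC : (d : ℂ) ≠ 0 := Nat.cast_ne_zero.mpr hd
      simp only [hg]
      push_cast
      field_simp
      ring_nf
  have htsum : ∑' d, g d = 1 / (riemannZeta s * (j : ℂ) ^ s) := by
    have h1 : ∑' d, g d = (1 / (j : ℂ) ^ s) * LSeries ↗μ s := by
      rw [LSeries, ← tsum_mul_left]
      exact tsum_congr hterm
    rw [h1, hLmu]
    have hjs : (j : ℂ) ^ s ≠ 0 := pow_ne_zero _ hjC
    field_simp
  -- Tannery / dominated convergence
  have hTan : Tendsto (fun n => ∑' d, F n d) atTop (nhds (∑' d, g d)) := by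
    apply tendsto_tsum_of_dominated_convergence
      (bound := fun d : ℕ => if d = 0 then 0 else 1 / ((j * d : ℕ) : ℝ) ^ s)
    · -- summability of the bound
      apply Summable.of_nonneg_of_le (f := fun d : ℕ => 1 / (d : ℝ) ^ s)
      · intro d; positivity
      · intro d
        rcases eq_or_ne d 0 with rfl | hd
        · simp
        · simp only [hd, if_false]
          apply one_div_le_one_div_of_le
          · have : 0 < d := Nat.pos_of_ne_zero hd
            positivity
          · have h2 : (d : ℝ) ≤ ((j * d : ℕ) : ℝ) := by
              exact_mod_cast Nat.le_mul_of_pos_left d (by omega : 0 < j)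
            exact pow_le_pow_left₀ (by positivity) h2 s
      · exact Real.summable_one_div_nat_pow.mpr (by omega)
    · -- termwise convergence
      intro d
      rcases eq_or_ne d 0 with rfl | hd
      · have hF0 : ∀ n, F n 0 = 0 := by
          intro n; simp [hF]
        have hg0 : g 0 = 0 := by simp [hg]
        simp only [hF0, hg0]
        exact tendsto_const_nhds
      · have hm : 0 < j * d := by positivity
        have h0 := ((aux_div_tendsto (j * d) hm).pow s).const_mul ((μ d : ℤ) : ℝ)
        have h1 := (Complex.continuous_ofReal.tendsto _).comp h0
        have hval : (((((μ d : ℤ) : ℝ)) * (1 / ((j * d : ℕ) : ℝ)) ^ s : ℝ) : ℂ) = g d := by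
          simp only [hg]
          push_cast
          field_simp
          rw [one_div, inv_pow, mul_assoc, inv_mul_cancel₀ (pow_ne_zero _ (mul_ne_zero hjC (Nat.cast_ne_zero.mpr hd))), mul_one]
        rw [← hval]
        refine h1.congr fun n => ?_
        simp only [Function.comp, hF]
        push_cast
        ring
    · -- uniform bound
      filter_upwards [eventually_ge_atTop 1] with n hn
      intro d
      rcases eq_or_ne d 0 with rfl | hd
      · simp [hF]
      · simp only [hd, if_false]
        have hn' : (0 : ℝ) < n := by exact_mod_cast hn
        have hm : (0 : ℝ) < ((j * d : ℕ) : ℝ) := by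
          have : 0 < j * d := by positivity
          exact_mod_cast this
        have hA : ((n / (j * d) : ℕ) : ℝ) ≤ (n : ℝ) / ((j * d : ℕ) : ℝ) := Nat.cast_div_le
        have hnorm : ‖F n d‖ = |((μ d : ℤ) : ℝ)| * ((n / (j * d) : ℕ) : ℝ) ^ s / (n : ℝ) ^ s := by
          simp only [hF]
          rw [norm_div, norm_mul, norm_pow, norm_pow, Complex.norm_natCast,
            Complex.norm_natCast, Complex.norm_intCast]
        rw [hnorm]
        have hmu : |((μ d : ℤ) : ℝ)| ≤ 1 := by exact_mod_cast abs_moebius_le_one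
        calc |((μ d : ℤ) : ℝ)| * ((n / (j * d) : ℕ) : ℝ) ^ s / (n : ℝ) ^ s
            ≤ 1 * ((n : ℝ) / ((j * d : ℕ) : ℝ)) ^ s / (n : ℝ) ^ s := by
              gcongr
          _ = 1 / ((j * d : ℕ) : ℝ) ^ s := by
              rw [div_pow]
              field_simp
  -- identify the prelimit with the normalized count
  have heq : ∀ᶠ n in atTop, (∑' d, F n d) =
      (((Finset.filter (fun x : Fin s → ℕ => Finset.univ.gcd x = j)
            (Fintype.piFinset fun _ : Fin s => Finset.Icc 1 n)).card : ℝ) / (n : ℝ) ^ s : ℂ) := by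
    filter_upwards [eventually_ge_atTop 1] with n hn
    have hvanish : ∀ d ∉ Finset.Icc 1 (n / j), F n d = 0 := by
      intro d hd
      simp only [Finset.mem_Icc, not_and_or, not_le] at hd
      rcases hd with hd | hd
      · interval_cases d
        simp [hF]
      · have : n / (j * d) = 0 := by
          rw [← Nat.div_div_eq_div_mul]
          exact Nat.div_eq_of_lt hd
        simp [hF, this, zero_pow hs0]
    rw [tsum_eq_sum hvanish]
    have hcard : ((Finset.filter (fun x : Fin s → ℕ => Finset.univ.gcd x = j)
          (Fintype.piFinset fun _ : Fin s => Finset.Icc 1 n)).card : ℤ)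
        = ∑ d ∈ Finset.Icc 1 (n / j), μ d * ((n / (j * d) : ℕ) : ℤ) ^ s := by
      rw [show ((Finset.filter (fun x : Fin s → ℕ => Finset.univ.gcd x = j)
          (Fintype.piFinset fun _ : Fin s => Finset.Icc 1 n)).card)
          = ((Fintype.piFinset fun _ : Fin s => Finset.Icc 1 (n / j)).filter
            (fun y : Fin s → ℕ => Finset.univ.gcd y = 1)).card from aux_card_gcd_j s j hj n,
        aux_card_gcd_one s (by omega) (n / j)]
      refine Finset.sum_congr rfl fun d hd => ?_
      rw [Nat.div_div_eq_div_mul]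
    have hcardC : ((Finset.filter (fun x : Fin s → ℕ => Finset.univ.gcd x = j)
          (Fintype.piFinset fun _ : Fin s => Finset.Icc 1 n)).card : ℂ)
        = ∑ d ∈ Finset.Icc 1 (n / j), (μ d : ℂ) * ((n / (j * d) : ℕ) : ℂ) ^ s := by
      have h2 : (((Finset.filter (fun x : Fin s → ℕ => Finset.univ.gcd x = j)
            (Fintype.piFinset fun _ : Fin s => Finset.Icc 1 n)).card : ℤ) : ℂ)
          = ((∑ d ∈ Finset.Icc 1 (n / j), μ d * ((n / (j * d) : ℕ) : ℤ) ^ s : ℤ) : ℂ) := by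
        rw [hcard]
      push_cast at h2
      exact h2
    simp only [hF]
    rw [← Finset.sum_div, ← hcardC]
    push_cast
    ring
  rw [← htsum]
  exact hTan.congr' heq
end

section
/- The probability that two integers chosen independently and uniformly from {1,...,n} are coprime converges to 6/π² = 1/ζ(2) as n → ∞. -/
open Filter Finset Real ArithmeticFunction Topology
open scoped ArithmeticFunction.Moebius


lemma bound_summable : Summable (fun d : ℕ => 1 / (d : ℝ) ^ 2) :=
  Real.summable_one_div_nat_pow.mpr one_lt_two

lemma moebius_norm_le (d : ℕ) : ‖((μ d : ℤ) : ℝ)‖ ≤ 1 := by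
  rw [Real.norm_eq_abs, ← Int.cast_abs]
  exact_mod_cast abs_moebius_le_one

lemma g_summable : Summable (fun d : ℕ => (μ d : ℝ) / (d : ℝ) ^ 2) := by
  apply bound_summable.of_norm_bounded
  intro d
  rcases Nat.eq_zero_or_pos d with h | h
  · simp [h]
  rw [norm_div, norm_pow, Real.norm_natCast]
  apply div_le_div_of_nonneg_right (moebius_norm_le d) ?_  <;>
  · positivity

lemma tsum_moebius : ∑' d : ℕ, (μ d : ℝ) / (d : ℝ) ^ 2 = 6 / Real.pi ^ 2 := by
  have h2 : (1 : ℝ) < (2 : ℂ).re := by norm_num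
  have hz := LSeries_zeta_mul_Lseries_moebius h2
  rw [LSeries_zeta_eq_riemannZeta h2, riemannZeta_two] at hz
  have hpi : (Real.pi : ℂ) ≠ 0 := by exact_mod_cast Real.pi_ne_zero
  have hL : LSeries (fun n => ((μ n : ℤ) : ℂ)) 2 = 6 / (Real.pi : ℂ) ^ 2 := by
    field_simp at hz ⊢
    linear_combination hz
  apply Complex.ofReal_injective
  rw [Complex.ofReal_tsum]
  push_cast
  rw [← hL, LSeries]
  congr 1
  ext d
  rcases Nat.eq_zero_or_pos d with h | h
  · simp [h, LSeries.term]
  · rw [LSeries.term_of_ne_zero (by omega),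
      show (2 : ℂ) = ((2 : ℕ) : ℂ) by norm_num, Complex.cpow_natCast]


lemma card_dvd_Icc (n d : ℕ) : ((Finset.Icc 1 n).filter (d ∣ ·)).card = n / d := by
  rw [← Nat.card_multiples' n d]
  congr 1
  ext k
  simp only [mem_filter, mem_range, mem_Icc, Nat.lt_succ_iff]
  constructor
  · rintro ⟨⟨h1, h2⟩, h3⟩; exact ⟨h2, by omega, h3⟩
  · rintro ⟨h1, h2, h3⟩; exact ⟨⟨by omega, h1⟩, h3⟩

lemma moebius_sum_divisors {m : ℕ} (hm : m ≠ 0) :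
    ∑ d ∈ m.divisors, μ d = if m = 1 then 1 else 0 := by
  have h := congrArg (fun f : ArithmeticFunction ℤ => f m) moebius_mul_coe_zeta
  simp only [coe_mul_zeta_apply] at h
  rw [h, ArithmeticFunction.one_apply]

lemma count_coprime (n : ℕ) :
    (((Finset.Icc 1 n ×ˢ Finset.Icc 1 n).filter
        (fun q : ℕ × ℕ => Nat.gcd q.1 q.2 = 1)).card : ℤ)
    = ∑ d ∈ Finset.Icc 1 n, μ d * ((n / d : ℕ) : ℤ) ^ 2 := by
  have key : ∀ p : ℕ × ℕ, p ∈ Finset.Icc 1 n ×ˢ Finset.Icc 1 n →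
      (if Nat.gcd p.1 p.2 = 1 then (1 : ℤ) else 0)
      = ∑ d ∈ Finset.Icc 1 n, if d ∣ p.1 ∧ d ∣ p.2 then μ d else 0 := by
    rintro ⟨a, b⟩ hp
    simp only [mem_product, mem_Icc] at hp
    obtain ⟨⟨ha1, ha2⟩, ⟨hb1, hb2⟩⟩ := hp
    have hm0 : Nat.gcd a b ≠ 0 := by
      simp [Nat.gcd_eq_zero_iff]; omega
    have hfil : (Finset.Icc 1 n).filter (· ∣ Nat.gcd a b) = (Nat.gcd a b).divisors := by
      ext d
      simp only [mem_filter, mem_Icc, Nat.mem_divisors]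
      constructor
      · rintro ⟨_, h⟩; exact ⟨h, hm0⟩
      · rintro ⟨h, -⟩
        refine ⟨⟨?_, ?_⟩, h⟩
        · rcases Nat.eq_zero_or_pos d with rfl | hd
          · exact absurd (zero_dvd_iff.mp h) hm0
          · omega
        · exact le_trans (Nat.le_of_dvd (by omega) (h.trans (Nat.gcd_dvd_left a b))) ha2
    calc (if Nat.gcd a b = 1 then (1 : ℤ) else 0)
        = ∑ d ∈ (Nat.gcd a b).divisors, μ d := (moebius_sum_divisors hm0).symm
      _ = ∑ d ∈ (Finset.Icc 1 n).filter (· ∣ Nat.gcd a b), μ d := by rw [hfil]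
      _ = ∑ d ∈ Finset.Icc 1 n, if d ∣ Nat.gcd a b then μ d else 0 := Finset.sum_filter _ _
      _ = ∑ d ∈ Finset.Icc 1 n, if d ∣ a ∧ d ∣ b then μ d else 0 := by
          apply Finset.sum_congr rfl
          intro d _
          congr 1
          simp [Nat.dvd_gcd_iff]
  calc (((Finset.Icc 1 n ×ˢ Finset.Icc 1 n).filter
        (fun q : ℕ × ℕ => Nat.gcd q.1 q.2 = 1)).card : ℤ)
      = ∑ p ∈ Finset.Icc 1 n ×ˢ Finset.Icc 1 n,
          if Nat.gcd p.1 p.2 = 1 then (1 : ℤ) else 0 := by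
        rw [Finset.card_filter]; push_cast [apply_ite ((↑) : ℕ → ℤ)]; rfl
    _ = ∑ p ∈ Finset.Icc 1 n ×ˢ Finset.Icc 1 n, ∑ d ∈ Finset.Icc 1 n,
          if d ∣ p.1 ∧ d ∣ p.2 then μ d else 0 := Finset.sum_congr rfl key
    _ = ∑ d ∈ Finset.Icc 1 n, ∑ p ∈ Finset.Icc 1 n ×ˢ Finset.Icc 1 n,
          if d ∣ p.1 ∧ d ∣ p.2 then μ d else 0 := Finset.sum_comm
    _ = ∑ d ∈ Finset.Icc 1 n, μ d * ((n / d : ℕ) : ℤ) ^ 2 := by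
        apply Finset.sum_congr rfl
        intro d _
        rw [← Finset.sum_filter]
        rw [Finset.sum_const]
        have : (Finset.Icc 1 n ×ˢ Finset.Icc 1 n).filter (fun p : ℕ × ℕ => d ∣ p.1 ∧ d ∣ p.2)
            = ((Finset.Icc 1 n).filter (d ∣ ·)) ×ˢ ((Finset.Icc 1 n).filter (d ∣ ·)) := by
          rw [Finset.filter_product]
        rw [this, Finset.card_product, card_dvd_Icc, nsmul_eq_mul, Nat.cast_mul]
        ring


noncomputable def fprob (n d : ℕ) : ℝ := (μ d : ℝ) * ((n / d : ℕ) : ℝ) ^ 2 / (n : ℝ) ^ 2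

lemma div_tendsto (d : ℕ) (hd : 0 < d) :
    Tendsto (fun n : ℕ => ((n / d : ℕ) : ℝ) / (n : ℝ)) atTop (𝓝 (1 / d)) := by
  apply tendsto_of_tendsto_of_tendsto_of_le_of_le' (g := fun n : ℕ => 1 / (d : ℝ) - 1 / n)
    (h := fun _ : ℕ => 1 / (d : ℝ))
  · simpa using tendsto_const_nhds.sub (tendsto_one_div_atTop_nhds_zero_nat (𝕜 := ℝ))
  · exact tendsto_const_nhds
  · filter_upwards [eventually_ge_atTop 1] with n hn
    have hn0 : (0 : ℝ) < n := by exact_mod_cast hn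
    have hd0 : (0 : ℝ) < d := by exact_mod_cast hd
    have h1 : n < d * (n / d) + d := by
      have h2 := Nat.div_add_mod n d
      have h3 := Nat.mod_lt n hd
      omega
    have h1' : (n : ℝ) < d * ↑(n / d) + d := by exact_mod_cast h1
    rw [sub_le_iff_le_add, div_add_div _ _ (ne_of_gt hn0) (ne_of_gt hn0),
      div_le_div_iff₀ hd0 (by positivity)]
    nlinarith
  · filter_upwards [eventually_ge_atTop 1] with n hn
    have hn0 : (0 : ℝ) < n := by exact_mod_cast hn
    have hd0 : (0 : ℝ) < d := by exact_mod_cast hd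
    have h1 : (↑(n / d) : ℝ) * d ≤ n := by exact_mod_cast Nat.div_mul_le_self n d
    rw [div_le_div_iff₀ hn0 hd0]
    nlinarith

lemma fprob_bound (n d : ℕ) : ‖fprob n d‖ ≤ 1 / (d : ℝ) ^ 2 := by
  rcases Nat.eq_zero_or_pos d with rfl | hd
  · simp [fprob]
  rcases Nat.eq_zero_or_pos n with rfl | hn
  · simp [fprob]
  have hn0 : (0 : ℝ) < n := by exact_mod_cast hn
  have hd0 : (0 : ℝ) < d := by exact_mod_cast hd
  have h1 : (↑(n / d) : ℝ) * d ≤ n := by exact_mod_cast Nat.div_mul_le_self n d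
  have h2 : (↑(n / d) : ℝ) ^ 2 / n ^ 2 ≤ 1 / d ^ 2 := by
    rw [div_le_div_iff₀ (by positivity) (by positivity)]
    nlinarith [pow_le_pow_left₀ (show (0:ℝ) ≤ (↑(n / d) : ℝ) * d by positivity) h1 2]
  have h3 : ‖((μ d : ℤ) : ℝ)‖ ≤ 1 := by
    rw [Real.norm_eq_abs, ← Int.cast_abs]
    exact_mod_cast (abs_moebius_le_one (n := d))
  calc ‖fprob n d‖ = ‖((μ d : ℤ) : ℝ)‖ * ((↑(n / d) : ℝ) ^ 2 / n ^ 2) := by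
        rw [fprob, mul_div_assoc, norm_mul]
        congr 1
        rw [Real.norm_eq_abs, abs_of_nonneg (by positivity)]
    _ ≤ 1 * (1 / d ^ 2) := by
        apply mul_le_mul h3 h2 (by positivity) (by norm_num)
    _ = 1 / d ^ 2 := one_mul _

lemma fprob_tendsto (d : ℕ) :
    Tendsto (fun n : ℕ => fprob n d) atTop (𝓝 ((μ d : ℝ) / (d : ℝ) ^ 2)) := by
  rcases Nat.eq_zero_or_pos d with rfl | hd
  · simpa [fprob] using tendsto_const_nhds
  have h := (div_tendsto d hd).pow 2
  have h2 := h.const_mul ((μ d : ℤ) : ℝ)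
  have : (μ d : ℝ) * (1 / (d : ℝ)) ^ 2 = (μ d : ℝ) / (d : ℝ) ^ 2 := by ring
  rw [this] at h2
  apply h2.congr'
  filter_upwards [eventually_ge_atTop 1] with n hn
  have hn0 : ((n : ℝ)) ≠ 0 := by exact_mod_cast Nat.one_le_iff_ne_zero.mp hn
  rw [fprob]
  field_simp

/-- The probability that two independent uniform elements of `{1,…,n}` are coprime
converges to `6/π²`. -/
theorem coprime_probability_tendsto :
    Tendsto (fun n : ℕ =>
        ((Finset.filter (fun q : ℕ × ℕ => Nat.gcd q.1 q.2 = 1)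
            ((Finset.Icc 1 n) ×ˢ (Finset.Icc 1 n))).card : ℝ) / (n : ℝ) ^ 2)
      atTop (nhds (6 / Real.pi ^ 2)) := by
  have hmain := tendsto_tsum_of_dominated_convergence bound_summable fprob_tendsto
    (Filter.Eventually.of_forall fun n => fun d => fprob_bound n d)
  rw [tsum_moebius] at hmain
  apply hmain.congr'
  filter_upwards [eventually_ge_atTop 1] with n hn
  have hvanish : ∀ d ∉ Finset.Icc 1 n, fprob n d = 0 := by
    intro d hd
    simp only [mem_Icc, not_and_or, not_le] at hd
    rcases hd with hd | hd
    · interval_cases d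
      simp [fprob]
    · simp [fprob, Nat.div_eq_of_lt hd]
  calc ∑' d : ℕ, fprob n d
      = ∑ d ∈ Finset.Icc 1 n, fprob n d := tsum_eq_sum hvanish
    _ = (∑ d ∈ Finset.Icc 1 n, (μ d : ℝ) * ((n / d : ℕ) : ℝ) ^ 2) / (n : ℝ) ^ 2 := by
        rw [Finset.sum_div]
        simp only [fprob]
    _ = (((Finset.filter (fun q : ℕ × ℕ => Nat.gcd q.1 q.2 = 1)
            ((Finset.Icc 1 n) ×ˢ (Finset.Icc 1 n))).card : ℝ) / (n : ℝ) ^ 2) := by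
        congr 1
        have h := count_coprime n
        have h3 : ((∑ d ∈ Finset.Icc 1 n, μ d * ((n / d : ℕ) : ℤ) ^ 2 : ℤ) : ℝ)
            = ∑ d ∈ Finset.Icc 1 n, (μ d : ℝ) * ((n / d : ℕ) : ℝ) ^ 2 := by
          rw [Int.cast_sum]
          apply Finset.sum_congr rfl
          intro d _
          rw [Int.cast_mul, Int.cast_pow, Int.cast_natCast]
        rw [← h3, ← h, Int.cast_natCast]
end

section
/- Let s ≥ 1 and let G_{p,1},...,G_{p,s} (indexed over primes p) be mutually independent random variables with P(G_{p,k} ≥ j) = p^{-j} for all j ≥ 0. If s ≥ 2, then the random product ∏_p p^{min(G_{p,1},...,G_{p,s})} is almost surely finite, and its distribution is given by P(∏_p p^{min_k G_{p,k}} = j) = 1/(ζ(s) j^s) for every j ∈ ℕ. -/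
open MeasureTheory ProbabilityTheory Filter Topology
open scoped NNReal ENNReal

section AuxSum

lemma summable_aux : Summable (fun n : ℕ => ((n : ℝ≥0) + 2)⁻¹ ^ 2) := by
  rw [← NNReal.summable_coe]
  have h : Summable (fun n : ℕ => 1 / (n : ℝ) ^ 2) := Real.summable_one_div_nat_pow.2 one_lt_two
  have h2 := (summable_nat_add_iff 2).2 h
  refine h2.congr fun n => ?_
  push_cast
  rw [one_div, inv_pow]

lemma tsum_aux : ∑' n : ℕ, (((n : ℝ≥0∞) + 2))⁻¹ ^ 2 ≠ ⊤ := by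
  have := ENNReal.tsum_coe_ne_top_iff_summable.2 summable_aux
  convert this using 1
  refine tsum_congr fun n => ?_
  rw [ENNReal.coe_pow, ENNReal.coe_inv (by positivity)]
  push_cast
  ring_nf

lemma tsum_primes_ne_top {s : ℕ} (hs : 2 ≤ s) :
    ∑' p : {q : ℕ // q.Prime}, (((p : ℕ) : ℝ≥0∞))⁻¹ ^ s ≠ ⊤ := by
  have hinj : Function.Injective (fun p : {q : ℕ // q.Prime} => (p : ℕ) - 2) := by
    intro p q h
    simp only at h
    have hp := p.2.two_le
    have hq := q.2.two_le
    exact Subtype.ext (by omega)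
  have hb : ∀ p : {q : ℕ // q.Prime}, (((p : ℕ) : ℝ≥0∞))⁻¹ ^ s
      ≤ (fun n : ℕ => (((n : ℝ≥0∞) + 2))⁻¹ ^ 2) ((fun p : {q : ℕ // q.Prime} => (p : ℕ) - 2) p) := by
    intro p
    have h2 : (((p : ℕ) - 2 : ℕ) : ℝ≥0∞) + 2 = ((p : ℕ) : ℝ≥0∞) := by
      have h3 : ((p : ℕ) - 2) + 2 = (p : ℕ) := by have := p.2.two_le; omega
      exact_mod_cast congrArg (Nat.cast : ℕ → ℝ≥0∞) h3
    simp only [h2]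
    have h1 : (((p : ℕ) : ℝ≥0∞))⁻¹ ≤ 1 := by
      simp only [ENNReal.inv_le_one]
      exact_mod_cast p.2.one_lt.le
    exact pow_le_pow_of_le_one zero_le h1 hs
  refine ne_top_of_le_ne_top tsum_aux (le_trans (ENNReal.tsum_le_tsum hb) ?_)
  exact ENNReal.tsum_comp_le_tsum_of_injective hinj _

end AuxSum

section AuxIndep

variable {s : ℕ} {Ω : Type*} [MeasurableSpace Ω] {μ : Measure Ω}
  {G : {q : ℕ // q.Prime} × Fin s → Ω → ℕ}

lemma meas_iInter_pairs (hindep : iIndepFun G μ)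
    (T : Finset ({q : ℕ // q.Prime} × Fin s)) (S : {q : ℕ // q.Prime} × Fin s → Set ℕ)
    (hS : ∀ i, MeasurableSet (S i)) :
    μ (⋂ i ∈ T, G i ⁻¹' S i) = ∏ i ∈ T, μ (G i ⁻¹' S i) :=
  (iIndepFun_iff _ _ _).1 hindep T (fun i _ => ⟨S i, hS i, rfl⟩)

lemma meas_iInter_fin (hindep : iIndepFun G μ)
    (p : {q : ℕ // q.Prime}) (S : Fin s → Set ℕ) (hS : ∀ k, MeasurableSet (S k)) :
    μ (⋂ k, G (p, k) ⁻¹' S k) = ∏ k, μ (G (p, k) ⁻¹' S k) := by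
  classical
  have h := meas_iInter_pairs hindep ({p} ×ˢ Finset.univ) (fun i => S i.2) (fun i => hS i.2)
  have h1 : (⋂ i ∈ ({p} ×ˢ Finset.univ : Finset _), G i ⁻¹' S i.2) = ⋂ k, G (p, k) ⁻¹' S k := by
    ext ω
    simp only [Set.mem_iInter, Finset.mem_product, Finset.mem_singleton, Finset.mem_univ]
    constructor
    · intro h k; exact h (p, k) ⟨rfl, trivial⟩
    · rintro h ⟨q, k⟩ ⟨rfl, -⟩; exact h k
  have h2 : ∏ i ∈ ({p} ×ˢ Finset.univ : Finset _), μ (G i ⁻¹' S i.2)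
      = ∏ k, μ (G (p, k) ⁻¹' S k) := by
    rw [Finset.prod_product]
    simp
  rw [h1, h2] at h
  exact h

lemma group_indep (hmeas : ∀ pk, Measurable (G pk))
    (hindep : iIndepFun G μ) :
    iIndep (fun p : {q : ℕ // q.Prime} =>
      ⨆ k : Fin s, MeasurableSpace.comap (G (p, k)) inferInstance) μ := by
  classical
  set π : {q : ℕ // q.Prime} → Set (Set Ω) := fun p =>
    {t | ∃ S : Fin s → Set ℕ, (∀ k, MeasurableSet (S k)) ∧ t = ⋂ k, G (p, k) ⁻¹' S k} with hπ
  refine iIndepSets.iIndep (fun p => iSup_le fun k => (hmeas (p, k)).comap_le) π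
    (fun p => ?_) (fun p => le_antisymm ?_ ?_) ?_
  · -- pi system
    rintro t1 ⟨S1, hS1, rfl⟩ t2 ⟨S2, hS2, rfl⟩ -
    exact ⟨fun k => S1 k ∩ S2 k, fun k => (hS1 k).inter (hS2 k), by
      simp only [Set.preimage_inter]
      rw [Set.iInter_inter_distrib]⟩
  · -- iSup ≤ generateFrom
    refine iSup_le fun k => ?_
    intro t ht
    obtain ⟨S, hS, rfl⟩ := ht
    refine MeasurableSpace.measurableSet_generateFrom
      ⟨fun k' => if k' = k then S else Set.univ, ?_, ?_⟩
    · intro k'; dsimp only; split <;> simp [hS]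
    · ext ω; simp only [Set.mem_iInter, Set.mem_preimage]
      constructor
      · intro h k'
        split
        · next h' => subst h'; exact h
        · trivial
      · intro h; have := h k; simpa using this
  · -- generateFrom ≤ iSup
    refine MeasurableSpace.generateFrom_le ?_
    rintro t ⟨S, hS, rfl⟩
    exact MeasurableSet.iInter fun k =>
      (le_iSup (fun k : Fin s => MeasurableSpace.comap (G (p, k)) inferInstance) k) _
        ⟨S k, hS k, rfl⟩
  · -- iIndepSets
    rw [iIndepSets_iff]
    intro t f hf
    choose S hSmeas hSeq using fun p (hp : p ∈ t) => hf p hp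
    set S' : {q : ℕ // q.Prime} → Fin s → Set ℕ := fun p =>
      if hp : p ∈ t then S p hp else fun _ => Set.univ with hS'
    have hS'meas : ∀ p k, MeasurableSet (S' p k) := by
      intro p k; simp only [hS']; split
      · exact hSmeas _ _ _
      · exact MeasurableSet.univ
    have hfeq : ∀ p ∈ t, f p = ⋂ k, G (p, k) ⁻¹' S' p k := by
      intro p hp; rw [hSeq p hp]; simp [hS', hp]
    have key := meas_iInter_pairs hindep (t ×ˢ Finset.univ) (fun i => S' i.1 i.2)
      (fun i => hS'meas i.1 i.2)
    have h1 : (⋂ i ∈ (t ×ˢ Finset.univ : Finset _), G i ⁻¹' S' i.1 i.2) = ⋂ p ∈ t, f p := by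
      ext ω
      simp only [Set.mem_iInter, Finset.mem_product, Finset.mem_univ, and_true]
      constructor
      · intro h p hp
        rw [hfeq p hp]
        exact Set.mem_iInter.2 fun k => h (p, k) hp
      · rintro h ⟨p, k⟩ hp
        have := h p hp
        rw [hfeq p hp] at this
        exact Set.mem_iInter.1 this k
    have h2 : ∏ i ∈ (t ×ˢ Finset.univ : Finset _), μ (G i ⁻¹' S' i.1 i.2)
        = ∏ p ∈ t, μ (f p) := by
      rw [Finset.prod_product]
      refine Finset.prod_congr rfl fun p hp => ?_
      rw [hfeq p hp, meas_iInter_fin hindep p _ (hS'meas p)]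
    rw [h1, h2] at key
    exact key

/-- `Cset G p j` is the event `{j ≤ min_k G (p,k)}`. -/
def Cset (G : {q : ℕ // q.Prime} × Fin s → Ω → ℕ) (p : {q : ℕ // q.Prime}) (j : ℕ) : Set Ω :=
  ⋂ k, G (p, k) ⁻¹' Set.Ici j

lemma mem_Cset (hs : 2 ≤ s) (p : {q : ℕ // q.Prime}) (j : ℕ) (ω : Ω) :
    ω ∈ Cset G p j ↔ j ≤ sInf (Set.range fun k : Fin s => G (p, k) ω) := by
  have hne : (Set.range fun k : Fin s => G (p, k) ω).Nonempty :=
    ⟨G (p, ⟨0, by omega⟩) ω, Set.mem_range_self _⟩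
  simp only [Cset, Set.mem_iInter, Set.mem_preimage, Set.mem_Ici]
  constructor
  · intro h
    exact le_csInf hne (by rintro x ⟨k, rfl⟩; exact h k)
  · intro h k
    exact le_trans h (Nat.sInf_le ⟨k, rfl⟩)

lemma Cset_meas_group (p : {q : ℕ // q.Prime}) (j : ℕ) :
    MeasurableSet[⨆ k : Fin s, MeasurableSpace.comap (G (p, k)) inferInstance] (Cset G p j) :=
  MeasurableSet.iInter fun k =>
    (le_iSup (fun k : Fin s => MeasurableSpace.comap (G (p, k)) inferInstance) k) _
      ⟨Set.Ici j, measurableSet_Ici, rfl⟩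

lemma Cset_meas (hmeas : ∀ pk, Measurable (G pk)) (p : {q : ℕ // q.Prime}) (j : ℕ) :
    MeasurableSet (Cset G p j) :=
  MeasurableSet.iInter fun k => hmeas (p, k) measurableSet_Ici

lemma Cset_measure (hindep : iIndepFun G μ)
    (hgeom : ∀ pk : {q : ℕ // q.Prime} × Fin s, ∀ j : ℕ,
        μ {ω | j ≤ G pk ω} = ((pk.1.1 : ENNReal))⁻¹ ^ j)
    (p : {q : ℕ // q.Prime}) (j : ℕ) :
    μ (Cset G p j) = (((p : ℕ) : ENNReal)⁻¹ ^ s) ^ j := by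
  have : μ (Cset G p j) = ∏ _k : Fin s, ((p.1 : ENNReal))⁻¹ ^ j := by
    rw [Cset, meas_iInter_fin hindep p _ (fun k => measurableSet_Ici)]
    exact Finset.prod_congr rfl fun k _ => hgeom (p, k) j
  rw [this, Finset.prod_const, Finset.card_univ, Fintype.card_fin, ← pow_mul, ← pow_mul, mul_comm]

lemma Cset_antitone (p : {q : ℕ // q.Prime}) : ∀ {a b : ℕ}, a ≤ b → Cset G p b ⊆ Cset G p a := by
  intro a b hab
  exact Set.iInter_mono fun k => Set.preimage_mono (Set.Ici_subset_Ici.2 hab)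

/-- `Aset G p a` is the event `{min_k G (p,k) = a}`. -/
def Aset (G : {q : ℕ // q.Prime} × Fin s → Ω → ℕ) (p : {q : ℕ // q.Prime}) (a : ℕ) : Set Ω :=
  Cset G p a \ Cset G p (a + 1)

lemma mem_Aset (hs : 2 ≤ s) (p : {q : ℕ // q.Prime}) (a : ℕ) (ω : Ω) :
    ω ∈ Aset G p a ↔ sInf (Set.range fun k : Fin s => G (p, k) ω) = a := by
  simp only [Aset, Set.mem_diff, mem_Cset hs]
  omega

lemma Aset_measure [IsProbabilityMeasure μ] (hmeas : ∀ pk, Measurable (G pk))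
    (hindep : iIndepFun G μ)
    (hgeom : ∀ pk : {q : ℕ // q.Prime} × Fin s, ∀ j : ℕ,
        μ {ω | j ≤ G pk ω} = ((pk.1.1 : ENNReal))⁻¹ ^ j)
    (p : {q : ℕ // q.Prime}) (a : ℕ) :
    μ (Aset G p a) = (((p : ℕ) : ENNReal)⁻¹ ^ s) ^ a * (1 - ((p : ℕ) : ENNReal)⁻¹ ^ s) := by
  have hq : (((p : ℕ) : ENNReal)⁻¹ ^ s) ≠ ⊤ :=
    ENNReal.pow_ne_top (ENNReal.inv_ne_top.2 (by exact_mod_cast p.2.pos.ne'))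
  rw [Aset, measure_diff (Cset_antitone p (Nat.le_succ a))
      ((Cset_meas hmeas p (a+1)).nullMeasurableSet) (measure_ne_top μ _),
    Cset_measure hindep hgeom, Cset_measure hindep hgeom,
    ENNReal.mul_sub (fun _ _ => ENNReal.pow_ne_top hq), mul_one, pow_succ]

end AuxIndep

section AuxNT

/-- Unique factorization: a finitely supported prime-power product equals `j ≥ 1`
iff the exponents match `j.factorization`. -/
lemma finprod_prime_pow_eq_iff {m : {q : ℕ // q.Prime} → ℕ}
    (hfin : {p : {q : ℕ // q.Prime} | m p ≠ 0}.Finite) {j : ℕ} (hj : 1 ≤ j) :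
    (∏ᶠ p : {q : ℕ // q.Prime}, (p : ℕ) ^ m p = j) ↔
      ∀ p : {q : ℕ // q.Prime}, m p = j.factorization p := by
  classical
  have hsupp : Function.mulSupport (fun p : {q : ℕ // q.Prime} => (p : ℕ) ^ m p)
      = {p | m p ≠ 0} := by
    ext p
    simp only [Function.mem_mulSupport, Set.mem_setOf_eq, not_iff_not]
    constructor
    · intro h
      rcases Nat.eq_zero_or_pos (m p) with h0 | h0
      · exact h0
      · exfalso
        have := Nat.one_lt_pow h0.ne' p.2.one_lt
        omega
    · intro h; rw [h, pow_zero]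
  have hfin' : (Function.mulSupport (fun p : {q : ℕ // q.Prime} => (p : ℕ) ^ m p)).Finite := by
    rw [hsupp]; exact hfin
  rw [finprod_eq_prod _ hfin']
  set T := hfin'.toFinset with hT
  set v := ∏ p ∈ T, (p : ℕ) ^ m p with hv
  have hvne : v ≠ 0 := by
    refine Finset.prod_ne_zero_iff.2 fun p _ => ?_
    exact pow_ne_zero _ p.2.pos.ne'
  have hfact : ∀ q : {q : ℕ // q.Prime}, v.factorization q = m q := by
    intro q
    rw [hv, Nat.factorization_prod (fun p _ => pow_ne_zero _ p.2.pos.ne')]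
    rw [Finsupp.finset_sum_apply]
    have : ∀ p ∈ T, (((p : ℕ) ^ m p).factorization) (q : ℕ)
        = if p = q then m p else 0 := by
      intro p _
      rw [p.2.factorization_pow, Finsupp.single_apply]
      congr 1
      simp [Subtype.ext_iff, eq_comm]
    rw [Finset.sum_congr rfl this, Finset.sum_ite_eq' T q m]
    split
    · rfl
    · next h =>
      by_contra h2
      exact h (hfin'.mem_toFinset.2
        (by rw [hsupp]; exact Set.mem_setOf_eq ▸ fun hmq => h2 (hmq ▸ rfl)))
  constructor
  · intro h q
    rw [← h, ← hfact q]
  · intro h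
    have : v.factorization = j.factorization := by
      ext q
      by_cases hq : q.Prime
      · rw [hfact ⟨q, hq⟩, h ⟨q, hq⟩]
      · rw [Nat.factorization_eq_zero_of_not_prime _ hq,
          Nat.factorization_eq_zero_of_not_prime _ hq]
    exact Nat.factorization_inj hvne
      (by simpa using hj.trans_lt' Nat.zero_lt_one |>.ne') this

lemma tendsto_partial_euler {s : ℕ} (hs : 2 ≤ s) :
    Tendsto (fun n : ℕ => ∏ q ∈ n.primesBelow, (1 - (q : ℂ) ^ (-(s : ℂ)))) atTop
      (𝓝 (riemannZeta s)⁻¹) := by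
  have hre : 1 < (s : ℂ).re := by
    simp only [Complex.natCast_re]
    exact_mod_cast by omega
  have h := (riemannZeta_eulerProduct hre).inv₀ (riemannZeta_ne_zero_of_one_lt_re hre)
  refine h.congr fun n => ?_
  rw [← Finset.prod_inv_distrib]
  exact Finset.prod_congr rfl fun q _ => inv_inv _

lemma prod_primesBelow_pow_factorization {j n : ℕ} (hj : j ≠ 0) (hn : j < n) :
    ∏ q ∈ n.primesBelow, q ^ j.factorization q = j := by
  conv_rhs => rw [← Nat.factorization_prod_pow_eq_self hj]
  rw [Finsupp.prod]
  refine (Finset.prod_subset ?_ ?_).symm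
  · intro q hq
    rw [Nat.support_factorization] at hq
    exact Nat.mem_primesBelow.2 ⟨lt_of_le_of_lt (Nat.le_of_mem_primeFactors hq) hn,
      Nat.prime_of_mem_primeFactors hq⟩
  · intro q _ hq
    rw [Finsupp.notMem_support_iff.1 hq, pow_zero]

lemma complex_prod_eq {s j n : ℕ} (hj : j ≠ 0) (hn : j < n) :
    ∏ q ∈ n.primesBelow, (((q : ℂ)) ^ (s * j.factorization q))⁻¹ = (((j : ℂ)) ^ s)⁻¹ := by
  rw [Finset.prod_inv_distrib]
  congr 1
  have h := prod_primesBelow_pow_factorization hj hn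
  calc ∏ q ∈ n.primesBelow, (q : ℂ) ^ (s * j.factorization q)
      = ∏ q ∈ n.primesBelow, ((q : ℂ) ^ j.factorization q) ^ s := by
        refine Finset.prod_congr rfl fun q _ => ?_
        rw [← pow_mul, mul_comm]
    _ = ((∏ q ∈ n.primesBelow, q ^ j.factorization q : ℕ) : ℂ) ^ s := by
        push_cast; rw [Finset.prod_pow]
    _ = ((j : ℂ)) ^ s := by rw [h]

lemma factor_eq {s : ℕ} (p : ℕ) (a : ℕ) :
    (((1 - ((p : ℝ))⁻¹ ^ s) * (((p : ℝ))⁻¹ ^ s) ^ a : ℝ) : ℂ)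
      = (1 - ((p : ℂ)) ^ (-(s : ℂ))) * (((p : ℂ)) ^ (s * a))⁻¹ := by
  have hcp : ((p : ℂ)) ^ (-(s : ℂ)) = ((p : ℂ) ^ s)⁻¹ := by
    rw [Complex.cpow_neg, Complex.cpow_natCast]
  rw [hcp]
  push_cast
  rw [inv_pow, inv_pow, ← pow_mul]

end AuxNT

/-- If `G_{p,k}` (`p` prime, `1 ≤ k ≤ s`, `s ≥ 2`) are mutually independent geometric
random variables with `P(G_{p,k} ≥ j) = p^{-j}`, then `∏_p p^{min_k G_{p,k}}` is a.s.
finite (only finitely many factors are non-trivial) and is distributed as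
`P(∏_p p^{min_k G_{p,k}} = j) = 1/(ζ(s) j^s)`. -/
theorem prod_pow_min_geometric_distribution
    (s : ℕ) (hs : 2 ≤ s)
    (Ω : Type*) [MeasurableSpace Ω] (μ : Measure Ω) [IsProbabilityMeasure μ]
    (G : {q : ℕ // q.Prime} × Fin s → Ω → ℕ)
    (hmeas : ∀ pk, Measurable (G pk))
    (hindep : iIndepFun G μ)
    (hgeom : ∀ pk : {q : ℕ // q.Prime} × Fin s, ∀ j : ℕ,
        μ {ω | j ≤ G pk ω} = ((pk.1.1 : ENNReal))⁻¹ ^ j) :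
    (∀ᵐ ω ∂μ, {p : {q : ℕ // q.Prime} |
        0 < sInf (Set.range fun k : Fin s => G (p, k) ω)}.Finite) ∧
    (∀ j : ℕ, 1 ≤ j →
      ((μ {ω | ∏ᶠ p : {q : ℕ // q.Prime},
            (p : ℕ) ^ sInf (Set.range fun k : Fin s => G (p, k) ω) = j}).toReal : ℂ)
          = 1 / (riemannZeta s * (j : ℂ) ^ s)) := by
  classical
  -- Part 1: Borel–Cantelli
  have hsum : ∑' p : {q : ℕ // q.Prime}, μ (Cset G p 1) ≠ ⊤ := by
    have h1 : ∑' p : {q : ℕ // q.Prime}, μ (Cset G p 1)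
        = ∑' p : {q : ℕ // q.Prime}, (((p : ℕ) : ℝ≥0∞))⁻¹ ^ s :=
      tsum_congr fun p => by rw [Cset_measure hindep hgeom, pow_one]
    rw [h1]
    exact tsum_primes_ne_top hs
  have part1 : ∀ᵐ ω ∂μ, {p : {q : ℕ // q.Prime} |
      0 < sInf (Set.range fun k : Fin s => G (p, k) ω)}.Finite := by
    filter_upwards [MeasureTheory.ae_finite_setOf_mem hsum] with ω h
    have : {p : {q : ℕ // q.Prime} | 0 < sInf (Set.range fun k : Fin s => G (p, k) ω)}
        = {p : {q : ℕ // q.Prime} | ω ∈ Cset G p 1} := by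
      ext p
      simp only [Set.mem_setOf_eq, mem_Cset hs]
      omega
    rw [this]
    exact h
  refine ⟨part1, fun j hj => ?_⟩
  have hj0 : j ≠ 0 := by omega
  set a : {q : ℕ // q.Prime} → ℕ := fun p => j.factorization p with ha
  set T : Set Ω := ⋂ p : {q : ℕ // q.Prime}, Aset G p (a p) with hT
  set Pn : ℕ → Finset {q : ℕ // q.Prime} := fun n => Finset.subtype _ (Finset.range n) with hPn
  set F : ℕ → Set Ω := fun n => ⋂ p ∈ Pn n, Aset G p (a p) with hF
  have hAmeas : ∀ (p) (b : ℕ), MeasurableSet (Aset G p b) :=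
    fun p b => (Cset_meas hmeas p b).diff (Cset_meas hmeas p _)
  have hFmeas : ∀ n, MeasurableSet (F n) :=
    fun n => Finset.measurableSet_biInter _ (fun p _ => hAmeas p _)
  have hFanti : Antitone F := by
    intro n m hnm ω hω
    simp only [hF, Set.mem_iInter] at hω ⊢
    intro p hp
    refine hω p (Finset.mem_subtype.2 ?_)
    have h1 := Finset.mem_subtype.1 hp
    rw [Finset.mem_range] at h1 ⊢
    omega
  have hiInter : ⋂ n, F n = T := by
    ext ω
    simp only [hF, hT, Set.mem_iInter]
    constructor
    · intro h p
      exact h ((p : ℕ) + 1) p (by simp only [hPn, Finset.mem_subtype, Finset.mem_range]; omega)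
    · intro h n p _
      exact h p
  have htend : Tendsto (fun n => μ (F n)) atTop (𝓝 (μ T)) := by
    have := tendsto_measure_iInter_atTop (μ := μ) (fun n => (hFmeas n).nullMeasurableSet) hFanti
      ⟨0, measure_ne_top μ _⟩
    rwa [hiInter] at this
  have hμF : ∀ n, μ (F n) = ∏ p ∈ Pn n, μ (Aset G p (a p)) :=
    fun n => (group_indep hmeas hindep).meas_biInter
      (fun p _ => (Cset_meas_group p _).diff (Cset_meas_group p _))
  -- per-prime value
  have hval : ∀ p : {q : ℕ // q.Prime}, ((μ (Aset G p (a p))).toReal : ℂ)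
      = (1 - ((p : ℕ) : ℂ) ^ (-(s : ℂ))) * (((p : ℕ) : ℂ) ^ (s * a p))⁻¹ := by
    intro p
    have hq1 : (((p : ℕ) : ℝ≥0∞))⁻¹ ^ s ≤ 1 := by
      refine pow_le_one' ?_ _
      simp only [ENNReal.inv_le_one]
      exact_mod_cast p.2.one_lt.le
    have hstep : (μ (Aset G p (a p))).toReal
        = (1 - ((p : ℕ) : ℝ)⁻¹ ^ s) * (((p : ℕ) : ℝ)⁻¹ ^ s) ^ (a p) := by
      rw [Aset_measure hmeas hindep hgeom, ENNReal.toReal_mul, mul_comm]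
      congr 1
      · rw [ENNReal.toReal_sub_of_le hq1 ENNReal.one_ne_top, ENNReal.toReal_one,
          ENNReal.toReal_pow, ENNReal.toReal_inv, ENNReal.toReal_natCast]
      · rw [ENNReal.toReal_pow, ENNReal.toReal_pow, ENNReal.toReal_inv, ENNReal.toReal_natCast]
    rw [hstep]
    exact factor_eq (p : ℕ) (a p)
  -- explicit formula for n > j
  have hexp : ∀ n, j < n → ((μ (F n)).toReal : ℂ)
      = (∏ q ∈ n.primesBelow, (1 - (q : ℂ) ^ (-(s : ℂ)))) * (((j : ℂ)) ^ s)⁻¹ := by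
    intro n hn
    rw [hμF n, ENNReal.toReal_prod, Complex.ofReal_prod,
      ← complex_prod_eq (s := s) hj0 hn, ← Finset.prod_mul_distrib]
    refine Finset.prod_nbij (fun p => (p : ℕ)) ?_ ?_ ?_ ?_
    · intro p hp
      simp only [hPn, Finset.mem_subtype, Finset.mem_range] at hp
      exact Nat.mem_primesBelow.2 ⟨hp, p.2⟩
    · intro p _ q _ h
      exact Subtype.ext h
    · intro q hq
      rw [Finset.mem_coe, Nat.mem_primesBelow] at hq
      exact ⟨⟨q, hq.2⟩, by simp [hPn, Finset.mem_subtype, Finset.mem_range, hq.1], rfl⟩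
    · intro p _
      exact hval p
  -- two limits
  have hlim1 : Tendsto (fun n => ((μ (F n)).toReal : ℂ)) atTop (𝓝 (((μ T).toReal : ℂ))) :=
    (Complex.continuous_ofReal.tendsto _).comp
      ((ENNReal.tendsto_toReal (measure_ne_top μ T)).comp htend)
  have hlim2 : Tendsto (fun n => ((μ (F n)).toReal : ℂ)) atTop
      (𝓝 ((riemannZeta s)⁻¹ * (((j : ℂ)) ^ s)⁻¹)) := by
    refine Tendsto.congr' ?_ ((tendsto_partial_euler hs).mul_const ((((j : ℂ)) ^ s)⁻¹))
    filter_upwards [eventually_gt_atTop j] with n hn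
    exact (hexp n hn).symm
  have hkey : ((μ T).toReal : ℂ) = (riemannZeta s)⁻¹ * (((j : ℂ)) ^ s)⁻¹ :=
    tendsto_nhds_unique hlim1 hlim2
  -- the event is a.e. equal to T
  have hcongr : μ {ω | ∏ᶠ p : {q : ℕ // q.Prime},
      (p : ℕ) ^ sInf (Set.range fun k : Fin s => G (p, k) ω) = j} = μ T := by
    apply measure_congr
    rw [Filter.eventuallyEq_set]
    filter_upwards [part1] with ω hfin
    have hfin' : {p : {q : ℕ // q.Prime} |
        (fun p => sInf (Set.range fun k : Fin s => G (p, k) ω)) p ≠ 0}.Finite := by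
      refine hfin.subset fun p hp => ?_
      simp only [Set.mem_setOf_eq] at *
      omega
    show (∏ᶠ p : {q : ℕ // q.Prime},
        (p : ℕ) ^ sInf (Set.range fun k : Fin s => G (p, k) ω) = j) ↔ ω ∈ T
    rw [finprod_prime_pow_eq_iff hfin' hj]
    simp only [hT, Set.mem_iInter, mem_Aset hs, ha]
  rw [hcongr, hkey, one_div, mul_inv]
end
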